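/- arXiv:2212.14509 — 4 statements merged into one kernel-verified Lean document; each statement's English description precedes it below -/
import Mathlib

section
/- The function c : ℝⁿ × ℝⁿ × [0, t_f] → [0, ∞] defined by c(x,y,t) = ‖ξ−x‖²/t + ‖y−ξ‖²/(t_f−t) for t ∈ (0,t_f), with the conventions c = +∞ when t = 0 and x ≠ ξ or t = t_f and y ≠ ξ, and the singular terms taken as 0 when the numerator vanishes, is lower semicontinuous. -/
open MeasureTheory

open ENNReal in
lemma lsc_div_aux {α : Type*} [TopologicalSpace α] {g h : α → ℝ}
    (hg : Continuous g) (hh : Continuous h) :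
    LowerSemicontinuous (fun p => ENNReal.ofReal (g p) / ENNReal.ofReal (h p)) := by
  have key : (fun p => ENNReal.ofReal (g p) / ENNReal.ofReal (h p))
      = fun p => ⨆ k : ℕ, ENNReal.ofReal (g p) * min (ENNReal.ofReal (h p))⁻¹ (k : ℝ≥0∞) := by
    funext p
    rw [← ENNReal.mul_iSup]
    congr 1
    have hx : (⨆ k : ℕ, (ENNReal.ofReal (h p))⁻¹ ⊓ (k : ℝ≥0∞)) = (ENNReal.ofReal (h p))⁻¹ := by
      rw [← inf_iSup_eq, ENNReal.iSup_natCast, inf_top_eq]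
    simp only [div_eq_mul_inv, one_mul]
    rw [hx]
  rw [key]
  apply lowerSemicontinuous_iSup
  intro k
  apply Continuous.lowerSemicontinuous
  rw [continuous_iff_continuousAt]
  intro x
  apply ENNReal.Tendsto.mul
  · exact (ENNReal.continuous_ofReal.comp hg).continuousAt
  · right
    exact ne_top_of_le_ne_top (natCast_ne_top k) (min_le_right _ _)
  · exact (((ENNReal.continuous_ofReal.comp hh).inv).min continuous_const).continuousAt
  · right
    exact ENNReal.ofReal_ne_top
theorem stmt_8 (n : ℕ) (ξ : EuclideanSpace ℝ (Fin n)) (t_f : ℝ) (htf : 0 < t_f) :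
    LowerSemicontinuousOn
      (fun p : EuclideanSpace ℝ (Fin n) × EuclideanSpace ℝ (Fin n) × ℝ =>
        ENNReal.ofReal (‖ξ - p.1‖ ^ 2) / ENNReal.ofReal p.2.2
          + ENNReal.ofReal (‖p.2.1 - ξ‖ ^ 2) / ENNReal.ofReal (t_f - p.2.2))
      {p | p.2.2 ∈ Set.Icc (0 : ℝ) t_f} := by
  apply LowerSemicontinuous.lowerSemicontinuousOn
  apply LowerSemicontinuous.add
  · exact lsc_div_aux (by fun_prop) (by fun_prop)
  · exact lsc_div_aux (by fun_prop) (by fun_prop)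
end

section
/- Let μ have support in [-M, 0) and σ be an absolutely continuous probability measure on (0, t_f]. If π is a coupling of (μ, σ) supported on a monotone decreasing set (i.e., for all (x,t), (x',t') in the support, (x − x')(t − t') ≤ 0), then π minimizes ∫ x²/t dπ over all couplings of (μ, σ). -/
open MeasureTheory ENNReal

open Set in
open scoped Interval in
lemma lin_s (t t_f c : ℝ) (ht1 : 0 < t) (ht2 : t ≤ t_f) (hc : 0 ≤ c) :
    ∫⁻ s in Icc t t_f, ENNReal.ofReal (c / s ^ 2) = ENNReal.ofReal (c * (t⁻¹ - t_f⁻¹)) := by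
  have hcont : ContinuousOn (fun s : ℝ => c / s ^ 2) (Icc t t_f) :=
    ContinuousOn.div continuousOn_const (continuous_pow 2).continuousOn
      (fun s hs => pow_ne_zero 2 (ne_of_gt (lt_of_lt_of_le ht1 hs.1)))
  have hint : IntegrableOn (fun s : ℝ => c / s ^ 2) (Icc t t_f) volume :=
    hcont.integrableOn_compact isCompact_Icc
  have hnn : 0 ≤ᶠ[ae (volume.restrict (Icc t t_f))] fun s : ℝ => c / s ^ 2 :=
    (ae_restrict_iff' measurableSet_Icc).2 (ae_of_all _ fun s _ => by
      simp only [Pi.zero_apply]; exact div_nonneg hc (sq_nonneg s))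
  rw [← ofReal_integral_eq_lintegral_ofReal hint hnn]
  congr 1
  have h0 : (0:ℝ) ∉ [[t, t_f]] := by
    rw [Set.uIcc_of_le ht2]; intro h; exact absurd h.1 (not_le.2 ht1)
  have hz := integral_zpow (a := t) (b := t_f) (n := -2) (Or.inr ⟨by norm_num, h0⟩)
  calc ∫ s in Icc t t_f, c / s ^ 2
      = ∫ s in t..t_f, c / s ^ 2 := by
        rw [integral_Icc_eq_integral_Ioc, ← intervalIntegral.integral_of_le ht2]
    _ = ∫ s in t..t_f, c * s ^ (-2:ℤ) := by
        apply intervalIntegral.integral_congr; intro s hs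
        show c / s ^ 2 = c * s ^ (-2:ℤ)
        rw [zpow_neg, show ((2:ℤ) = ((2:ℕ):ℤ)) from rfl, zpow_natCast, div_eq_mul_inv]
    _ = c * ((t_f ^ ((-2:ℤ) + 1) - t ^ ((-2:ℤ) + 1)) / (((-2:ℤ):ℝ) + 1)) := by
        rw [intervalIntegral.integral_const_mul, hz]
    _ = c * (t⁻¹ - t_f⁻¹) := by
        norm_num [zpow_neg]
        exact Or.inl (by ring)

open Set in
lemma lin_u (x c : ℝ) (hx : x ≤ 0) (hc : 0 ≤ c) :
    ∫⁻ u in Ico x 0, ENNReal.ofReal (2 * (-u) * c) = ENNReal.ofReal (x ^ 2 * c) := by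
  have hcont : Continuous (fun u : ℝ => 2 * (-u) * c) := by continuity
  have hint : IntegrableOn (fun u : ℝ => 2 * (-u) * c) (Ico x 0) volume :=
    (hcont.integrableOn_Icc (a := x) (b := 0)).mono_set Ico_subset_Icc_self
  have hnn : 0 ≤ᶠ[ae (volume.restrict (Ico x 0))] fun u : ℝ => 2 * (-u) * c :=
    (ae_restrict_iff' measurableSet_Ico).2 (ae_of_all _ fun u hu => by
      simp only [Pi.zero_apply]; nlinarith [hu.2])
  rw [← ofReal_integral_eq_lintegral_ofReal hint hnn]
  congr 1
  calc ∫ u in Ico x 0, 2 * (-u) * c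
      = ∫ u in Ioc x 0, 2 * (-u) * c := by
        rw [integral_Ico_eq_integral_Ioo, integral_Ioc_eq_integral_Ioo]
    _ = ∫ u in x..0, 2 * (-u) * c := (intervalIntegral.integral_of_le hx).symm
    _ = ∫ u in x..0, (-(2*c)) * u := by
        apply intervalIntegral.integral_congr; intro u _
        show 2 * (-u) * c = (-(2*c)) * u; ring
    _ = (-(2*c)) * ((0 ^ 2 - x ^ 2) / 2) := by
        rw [intervalIntegral.integral_const_mul, integral_id]
    _ = x ^ 2 * c := by ring

noncomputable def kfun (w p : ℝ × ℝ) : ℝ≥0∞ :=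
  Set.indicator {q : ℝ × ℝ | q.1 ≤ w.1 ∧ q.2 ≤ w.2}
    (fun _ => ENNReal.ofReal (2 * (-w.1) / w.2 ^ 2)) p

lemma kfun_meas : Measurable (fun z : (ℝ × ℝ) × (ℝ × ℝ) => kfun z.1 z.2) := by
  have hT : MeasurableSet {z : (ℝ × ℝ) × (ℝ × ℝ) | z.2.1 ≤ z.1.1 ∧ z.2.2 ≤ z.1.2} :=
    (measurableSet_le measurable_snd.fst measurable_fst.fst).inter
      (measurableSet_le measurable_snd.snd measurable_fst.snd)
  have heq : (fun z : (ℝ × ℝ) × (ℝ × ℝ) => kfun z.1 z.2)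
      = Set.indicator {z : (ℝ × ℝ) × (ℝ × ℝ) | z.2.1 ≤ z.1.1 ∧ z.2.2 ≤ z.1.2}
          (fun z => ENNReal.ofReal (2 * (-z.1.1) / z.1.2 ^ 2)) := by
    ext z
    by_cases h : z.2.1 ≤ z.1.1 ∧ z.2.2 ≤ z.1.2 <;>
      simp [kfun, Set.indicator, h]
  rw [heq]
  exact (Measurable.ennreal_ofReal (by fun_prop)).indicator hT

open Set in
lemma pointA (M t_f x t : ℝ) (hx : x ∈ Ico (-M) (0:ℝ)) (ht : t ∈ Ioc (0:ℝ) t_f) :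
    ENNReal.ofReal (x ^ 2) / ENNReal.ofReal t
      = ENNReal.ofReal (x ^ 2 / t_f)
        + ∫⁻ w in Ico (-M) (0:ℝ) ×ˢ Ioc (0:ℝ) t_f, kfun w (x, t) ∂volume := by
  have htf : (0:ℝ) < t_f := lt_of_lt_of_le ht.1 ht.2
  have hmeas : Measurable (fun w : ℝ × ℝ => kfun w (x, t)) :=
    kfun_meas.comp (measurable_id.prodMk measurable_const)
  have hIv : ∫⁻ w in Ico (-M) (0:ℝ) ×ˢ Ioc (0:ℝ) t_f, kfun w (x, t) ∂volume
      = ENNReal.ofReal (x ^ 2 * (t⁻¹ - t_f⁻¹)) := by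
    rw [Measure.volume_eq_prod, ← Measure.prod_restrict,
      lintegral_prod _ hmeas.aemeasurable]
    have inner : ∀ u ∈ Ico (-M) (0:ℝ), (∫⁻ s in Ioc (0:ℝ) t_f, kfun (u, s) (x, t))
        = Set.indicator (Ici x) (fun u => ENNReal.ofReal (2 * (-u) * (t⁻¹ - t_f⁻¹))) u := by
      intro u hu
      by_cases hxu : x ≤ u
      · have hptw : ∀ s, kfun (u, s) (x, t)
            = Set.indicator (Ici t) (fun s => ENNReal.ofReal (2 * (-u) / s ^ 2)) s := by
          intro s
          by_cases hts : t ≤ s <;> simp [kfun, Set.indicator, hxu, hts]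
        simp_rw [hptw]
        rw [lintegral_indicator measurableSet_Ici, Measure.restrict_restrict measurableSet_Ici]
        have hset : Ici t ∩ Ioc (0:ℝ) t_f = Icc t t_f := by
          ext s
          exact ⟨fun ⟨h1, h2⟩ => ⟨h1, h2.2⟩, fun ⟨h1, h2⟩ => ⟨h1, lt_of_lt_of_le ht.1 h1, h2⟩⟩
        rw [hset, lin_s t t_f (2 * (-u)) ht.1 ht.2 (by nlinarith [hu.2])]
        simp [Set.indicator, hxu]
      · have hptw : ∀ s, kfun (u, s) (x, t) = 0 := by
          intro s; simp [kfun, Set.indicator, hxu]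
        simp_rw [hptw]
        simp [Set.indicator, hxu]
    rw [setLIntegral_congr_fun measurableSet_Ico inner]
    rw [lintegral_indicator measurableSet_Ici, Measure.restrict_restrict measurableSet_Ici]
    have hset : Ici x ∩ Ico (-M) (0:ℝ) = Ico x 0 := by
      ext u
      exact ⟨fun ⟨h1, h2⟩ => ⟨h1, h2.2⟩, fun ⟨h1, h2⟩ => ⟨h1, le_trans hx.1 h1, h2⟩⟩
    rw [hset, lin_u x (t⁻¹ - t_f⁻¹) hx.2.le
      (sub_nonneg.2 (inv_anti₀ ht.1 ht.2))]
  rw [hIv, ← ENNReal.ofReal_add (div_nonneg (sq_nonneg x) htf.le)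
    (mul_nonneg (sq_nonneg x) (sub_nonneg.2 (inv_anti₀ ht.1 ht.2))),
    ← ENNReal.ofReal_div_of_pos ht.1]
  congr 1
  have ht0 : t ≠ 0 := ne_of_gt ht.1
  have htf0 : t_f ≠ 0 := ne_of_gt htf
  field_simp
  ring

open Set in
lemma repr_cost (M t_f : ℝ) (ρ : Measure (ℝ × ℝ)) [IsProbabilityMeasure ρ]
    (h0 : ρ (Ico (-M) (0:ℝ) ×ˢ Ioc (0:ℝ) t_f)ᶜ = 0) :
    ∫⁻ p, ENNReal.ofReal (p.1 ^ 2) / ENNReal.ofReal p.2 ∂ρ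
      = (∫⁻ p : ℝ × ℝ, ENNReal.ofReal (p.1 ^ 2 / t_f) ∂ρ)
        + ∫⁻ w in Ico (-M) (0:ℝ) ×ˢ Ioc (0:ℝ) t_f,
            ENNReal.ofReal (2 * (-w.1) / w.2 ^ 2) * ρ {p : ℝ × ℝ | p.1 ≤ w.1 ∧ p.2 ≤ w.2}
              ∂volume := by
  have hae : ∀ᵐ p ∂ρ, p ∈ Ico (-M) (0:ℝ) ×ˢ Ioc (0:ℝ) t_f := by
    have h := MeasureTheory.mem_ae_iff.mpr h0
    exact Filter.eventually_iff.mpr h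
  calc ∫⁻ p, ENNReal.ofReal (p.1 ^ 2) / ENNReal.ofReal p.2 ∂ρ
      = ∫⁻ p, (ENNReal.ofReal (p.1 ^ 2 / t_f)
          + ∫⁻ w in Ico (-M) (0:ℝ) ×ˢ Ioc (0:ℝ) t_f, kfun w p ∂volume) ∂ρ := by
        refine lintegral_congr_ae (hae.mono fun p hp => ?_)
        exact pointA M t_f p.1 p.2 hp.1 hp.2
    _ = (∫⁻ p : ℝ × ℝ, ENNReal.ofReal (p.1 ^ 2 / t_f) ∂ρ)
        + ∫⁻ p, ∫⁻ w in Ico (-M) (0:ℝ) ×ˢ Ioc (0:ℝ) t_f, kfun w p ∂volume ∂ρ := by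
        exact lintegral_add_left (by fun_prop) _
    _ = (∫⁻ p : ℝ × ℝ, ENNReal.ofReal (p.1 ^ 2 / t_f) ∂ρ)
        + ∫⁻ w in Ico (-M) (0:ℝ) ×ˢ Ioc (0:ℝ) t_f, ∫⁻ p, kfun w p ∂ρ ∂volume := by
        congr 1
        exact lintegral_lintegral_swap ((kfun_meas.comp measurable_swap).aemeasurable)
    _ = (∫⁻ p : ℝ × ℝ, ENNReal.ofReal (p.1 ^ 2 / t_f) ∂ρ)
        + ∫⁻ w in Ico (-M) (0:ℝ) ×ˢ Ioc (0:ℝ) t_f,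
            ENNReal.ofReal (2 * (-w.1) / w.2 ^ 2) * ρ {p : ℝ × ℝ | p.1 ≤ w.1 ∧ p.2 ≤ w.2}
              ∂volume := by
        congr 1
        refine lintegral_congr fun w => ?_
        have hAm : MeasurableSet {q : ℝ × ℝ | q.1 ≤ w.1 ∧ q.2 ≤ w.2} :=
          (measurableSet_le measurable_fst measurable_const).inter
            (measurableSet_le measurable_snd measurable_const)
        exact lintegral_indicator_const hAm _

theorem stmt_10 (M t_f : ℝ) (hM : 0 < M) (htf : 0 < t_f)
    (μ σ : Measure ℝ) [IsProbabilityMeasure μ] [IsProbabilityMeasure σ]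
    (hμ : μ (Set.Ico (-M) 0)ᶜ = 0) (hσ : σ (Set.Ioc 0 t_f)ᶜ = 0)
    (hσac : σ ≪ volume)
    (π : Measure (ℝ × ℝ)) [IsProbabilityMeasure π]
    (hπ1 : π.map Prod.fst = μ) (hπ2 : π.map Prod.snd = σ)
    (S : Set (ℝ × ℝ)) (hSfull : π Sᶜ = 0)
    (hSmono : ∀ p ∈ S, ∀ q ∈ S, (p.1 - q.1) * (p.2 - q.2) ≤ 0) :
    ∀ π' : Measure (ℝ × ℝ), IsProbabilityMeasure π' →
      π'.map Prod.fst = μ → π'.map Prod.snd = σ →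
      (∫⁻ p, ENNReal.ofReal (p.1 ^ 2) / ENNReal.ofReal p.2 ∂π) ≤
        ∫⁻ p, ENNReal.ofReal (p.1 ^ 2) / ENNReal.ofReal p.2 ∂π' := by
  intro π' hπ'prob hπ'1 hπ'2
  -- both couplings live on the rectangle
  have hcompl : ∀ (ρ : Measure (ℝ × ℝ)), ρ.map Prod.fst = μ → ρ.map Prod.snd = σ →
      ρ (Set.Ico (-M) (0:ℝ) ×ˢ Set.Ioc (0:ℝ) t_f)ᶜ = 0 := by
    intro ρ h1 h2
    have hsub : (Set.Ico (-M) (0:ℝ) ×ˢ Set.Ioc (0:ℝ) t_f)ᶜ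
        ⊆ (Prod.fst ⁻¹' (Set.Ico (-M) (0:ℝ))ᶜ) ∪ (Prod.snd ⁻¹' (Set.Ioc (0:ℝ) t_f)ᶜ) := by
      intro p hp
      rcases not_and_or.1 hp with h | h
      · exact Or.inl h
      · exact Or.inr h
    refine measure_mono_null hsub (measure_union_null ?_ ?_)
    · rw [← Measure.map_apply measurable_fst measurableSet_Ico.compl, h1]
      exact hμ
    · rw [← Measure.map_apply measurable_snd measurableSet_Ioc.compl, h2]
      exact hσ
  -- marginal identities for half-planes
  have hm1 : ∀ (ρ : Measure (ℝ × ℝ)), ρ.map Prod.fst = μ → ∀ u : ℝ,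
      ρ {p : ℝ × ℝ | p.1 ≤ u} = μ (Set.Iic u) := by
    intro ρ h u
    rw [← h, Measure.map_apply measurable_fst measurableSet_Iic]
    rfl
  have hm2 : ∀ (ρ : Measure (ℝ × ℝ)), ρ.map Prod.snd = σ → ∀ s : ℝ,
      ρ {p : ℝ × ℝ | p.2 ≤ s} = σ (Set.Iic s) := by
    intro ρ h s
    rw [← h, Measure.map_apply measurable_snd measurableSet_Iic]
    rfl
  -- key comparison: π is below π' on lower-left quadrants
  have hC : ∀ u s : ℝ, π {p : ℝ × ℝ | p.1 ≤ u ∧ p.2 ≤ s}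
      ≤ π' {p : ℝ × ℝ | p.1 ≤ u ∧ p.2 ≤ s} := by
    intro u s
    set A1 : Set (ℝ × ℝ) := {p | p.1 ≤ u} with hA1def
    set A2 : Set (ℝ × ℝ) := {p | p.2 ≤ s} with hA2def
    have hA1 : MeasurableSet A1 := measurableSet_le measurable_fst measurable_const
    have hA2 : MeasurableSet A2 := measurableSet_le measurable_snd measurable_const
    have hAi : {p : ℝ × ℝ | p.1 ≤ u ∧ p.2 ≤ s} = A1 ∩ A2 := rfl
    by_cases hne : (S ∩ (A1 ∩ A2)).Nonempty
    · -- S avoids the strict upper-right quadrant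
      have hsub : (A1 ∪ A2)ᶜ ⊆ Sᶜ := by
        intro q hq hqS
        obtain ⟨p, hpS, hpA⟩ := hne
        simp only [Set.mem_compl_iff, Set.mem_union, hA1def, hA2def,
          Set.mem_setOf_eq, not_or, not_le] at hq
        have := hSmono p hpS q hqS
        have h1 : p.1 ≤ u := hpA.1
        have h2 : p.2 ≤ s := hpA.2
        nlinarith [hq.1, hq.2]
      have hCzero : π (A1 ∪ A2)ᶜ = 0 := measure_mono_null hsub hSfull
      have hunion : π (A1 ∪ A2) = 1 := by
        have h := measure_add_measure_compl (μ := π) (hA1.union hA2)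
        rw [hCzero, add_zero, measure_univ] at h
        exact h
      have hkey : π (A1 ∩ A2) + 1 = μ (Set.Iic u) + σ (Set.Iic s) := by
        have h := measure_union_add_inter (μ := π) A1 hA2
        rw [hunion, hm1 π hπ1 u, hm2 π hπ2 s] at h
        rw [add_comm] at h
        exact h
      have hkey' : π' (A1 ∩ A2) + π' (A1 ∪ A2) = μ (Set.Iic u) + σ (Set.Iic s) := by
        have h := measure_union_add_inter (μ := π') A1 hA2
        rw [hm1 π' hπ'1 u, hm2 π' hπ'2 s] at h
        rw [add_comm] at h
        exact h
      have hle : π (A1 ∩ A2) + 1 ≤ π' (A1 ∩ A2) + 1 := by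
        rw [hkey, ← hkey']
        exact add_le_add le_rfl (prob_le_one (μ := π') (s := A1 ∪ A2))
      rw [hAi]
      exact (ENNReal.add_le_add_iff_right one_ne_top).1 hle
    · rw [Set.not_nonempty_iff_eq_empty] at hne
      have hsub : A1 ∩ A2 ⊆ Sᶜ := fun q hq hqS =>
        Set.eq_empty_iff_forall_notMem.1 hne q ⟨hqS, hq⟩
      rw [hAi, measure_mono_null hsub hSfull]
      exact zero_le
  -- conclude via the representation
  rw [repr_cost M t_f π (hcompl π hπ1 hπ2), repr_cost M t_f π' (hcompl π' hπ'1 hπ'2)]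
  have hfirst : (∫⁻ p : ℝ × ℝ, ENNReal.ofReal (p.1 ^ 2 / t_f) ∂π)
      = ∫⁻ p : ℝ × ℝ, ENNReal.ofReal (p.1 ^ 2 / t_f) ∂π' := by
    have haux : ∀ (ρ : Measure (ℝ × ℝ)), ρ.map Prod.fst = μ →
        (∫⁻ p : ℝ × ℝ, ENNReal.ofReal (p.1 ^ 2 / t_f) ∂ρ)
          = ∫⁻ x : ℝ, ENNReal.ofReal (x ^ 2 / t_f) ∂μ := by
      intro ρ h
      rw [← h, lintegral_map (by fun_prop) measurable_fst]
    rw [haux π hπ1, haux π' hπ'1]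
  rw [hfirst]
  refine add_le_add le_rfl (lintegral_mono fun w => ?_)
  exact mul_le_mul_right (hC w.1 w.2) _
end

section
/- Suppose μ is supported in (-M, 0), ν in (0, M), r·t_f > 1, and consider minimizing ∫ (x²/t + y²/(t_f − t)) dπ over probability measures π on ℝ × ℝ × [0, t_f] with marginals μ, ν and t-marginal ≤ r·dt. If π is a minimizer with t-marginal σ(t)dt, then the (x,t)-marginal of π minimizes ∫ x²/t over couplings of (μ, σ·dt), and the (y,t)-marginal minimizes ∫ y²/(t_f − t) over couplings of (σ·dt, ν). -/
open MeasureTheory ENNReal ProbabilityTheory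

lemma glue_aux (ρ η' : Measure (ℝ × ℝ)) [IsProbabilityMeasure ρ] [IsProbabilityMeasure η']
    (h : η'.map Prod.fst = ρ.map Prod.fst) :
    ∃ m : Measure ((ℝ × ℝ) × ℝ), IsProbabilityMeasure m ∧
      m.map Prod.fst = η' ∧ m.map (fun q => (q.1.1, q.2)) = ρ := by
  set κ := ρ.condKernel.comap Prod.fst measurable_fst with hκ
  refine ⟨η' ⊗ₘ κ, ⟨by rw [Measure.compProd_apply_univ]; exact measure_univ⟩, ?_, ?_⟩
  · exact Measure.fst_compProd η' κ
  · ext s hs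
    rw [Measure.map_apply (by fun_prop) hs,
      Measure.compProd_apply (hs.preimage (by fun_prop))]
    have hmeas : Measurable fun t => ρ.condKernel t (Prod.mk t ⁻¹' s) :=
      Kernel.measurable_kernel_prodMk_left hs
    have hint : ∀ z : ℝ × ℝ, κ z (Prod.mk z ⁻¹' ((fun q : (ℝ × ℝ) × ℝ => (q.1.1, q.2)) ⁻¹' s))
        = ρ.condKernel z.1 (Prod.mk z.1 ⁻¹' s) := by
      intro z; rw [hκ, Kernel.comap_apply]; rfl
    simp_rw [hint]
    rw [← lintegral_map hmeas measurable_fst, h,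
      show ρ.map Prod.fst = ρ.fst from rfl,
      ← Measure.compProd_apply hs, ρ.disintegrate ρ.condKernel]

theorem stmt_11 (M r t_f : ℝ) (hM : 0 < M) (hr : 0 < r) (htf : 0 < t_f)
    (hrtf : 1 < r * t_f)
    (μ ν : Measure ℝ) [IsProbabilityMeasure μ] [IsProbabilityMeasure ν]
    (hμ : μ (Set.Ioo (-M) 0)ᶜ = 0) (hν : ν (Set.Ioo 0 M)ᶜ = 0)
    (Plans : Set (Measure (ℝ × ℝ × ℝ)))
    (hPlans : Plans = {π | IsProbabilityMeasure π ∧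
      π.map Prod.fst = μ ∧
      π.map (fun p => p.2.1) = ν ∧
      π.map (fun p => p.2.2) ≤ ENNReal.ofReal r • volume.restrict (Set.Icc 0 t_f)})
    (J : Measure (ℝ × ℝ × ℝ) → ℝ≥0∞)
    (hJ : J = fun π => ∫⁻ p, (ENNReal.ofReal (p.1 ^ 2) / ENNReal.ofReal p.2.2
      + ENNReal.ofReal (p.2.1 ^ 2) / ENNReal.ofReal (t_f - p.2.2)) ∂π)
    (π : Measure (ℝ × ℝ × ℝ)) (hπmem : π ∈ Plans)
    (hπopt : ∀ π' ∈ Plans, J π ≤ J π')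
    (σ : Measure ℝ) (hσ : σ = π.map (fun p => p.2.2)) :
    (∀ η : Measure (ℝ × ℝ), IsProbabilityMeasure η →
      η.map Prod.fst = μ → η.map Prod.snd = σ →
      (∫⁻ p, ENNReal.ofReal (p.1 ^ 2) / ENNReal.ofReal p.2
          ∂(π.map (fun p : ℝ × ℝ × ℝ => (p.1, p.2.2)))) ≤
        ∫⁻ p, ENNReal.ofReal (p.1 ^ 2) / ENNReal.ofReal p.2 ∂η) ∧
    (∀ η : Measure (ℝ × ℝ), IsProbabilityMeasure η →
      η.map Prod.fst = σ → η.map Prod.snd = ν →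
      (∫⁻ p, ENNReal.ofReal (p.2 ^ 2) / ENNReal.ofReal (t_f - p.1)
          ∂(π.map (fun p : ℝ × ℝ × ℝ => (p.2.2, p.2.1)))) ≤
        ∫⁻ p, ENNReal.ofReal (p.2 ^ 2) / ENNReal.ofReal (t_f - p.1) ∂η) := by
  rw [hPlans] at hπmem
  obtain ⟨hπprob, hπx, hπy, hπt⟩ := hπmem
  haveI := hπprob
  -- the two cost functions on (t, ·) pairs
  set g1 : ℝ × ℝ → ℝ≥0∞ := fun z => ENNReal.ofReal (z.2 ^ 2) / ENNReal.ofReal z.1 with hg1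
  set g2 : ℝ × ℝ → ℝ≥0∞ := fun z => ENNReal.ofReal (z.2 ^ 2) / ENNReal.ofReal (t_f - z.1)
    with hg2
  have hg1m : Measurable g1 := by fun_prop
  have hg2m : Measurable g2 := by fun_prop
  set A : ℝ≥0∞ := ∫⁻ p : ℝ × ℝ × ℝ, g1 (p.2.2, p.1) ∂π with hA
  set B : ℝ≥0∞ := ∫⁻ p : ℝ × ℝ × ℝ, g2 (p.2.2, p.2.1) ∂π with hB
  -- J π decomposes as A + B
  have hJπ : J π = A + B := by
    rw [hJ, ← lintegral_add_left (by fun_prop : Measurable fun p : ℝ × ℝ × ℝ => g1 (p.2.2, p.1))]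
  -- A is the first target LHS, B is the second
  have hAeq : (∫⁻ p, ENNReal.ofReal (p.1 ^ 2) / ENNReal.ofReal p.2
      ∂(π.map (fun p : ℝ × ℝ × ℝ => (p.1, p.2.2)))) = A := by
    rw [show (fun p : ℝ × ℝ => ENNReal.ofReal (p.1 ^ 2) / ENNReal.ofReal p.2)
        = fun p => g1 (p.2, p.1) from rfl,
      lintegral_map (by fun_prop) (by fun_prop)]
  have hBeq : (∫⁻ p, ENNReal.ofReal (p.2 ^ 2) / ENNReal.ofReal (t_f - p.1)
      ∂(π.map (fun p : ℝ × ℝ × ℝ => (p.2.2, p.2.1)))) = B := by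
    rw [show (fun p : ℝ × ℝ => ENNReal.ofReal (p.2 ^ 2) / ENNReal.ofReal (t_f - p.1)) = g2
        from rfl,
      lintegral_map (by fun_prop) (by fun_prop)]
  -- finiteness: build a finite-cost competitor
  have h1r : 1 / r < t_f := by rw [div_lt_iff₀ hr]; linarith
  set a : ℝ := (t_f - 1 / r) / 2 with had
  set b : ℝ := a + 1 / r with hbd
  have ha : 0 < a := by rw [had]; linarith
  have hb : b < t_f := by rw [hbd, had]; linarith
  set τ : Measure ℝ := ENNReal.ofReal r • volume.restrict (Set.Icc a b) with hτ
  have hτIcc : τ (Set.Icc a b) = 1 := by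
    rw [hτ, Measure.smul_apply, Measure.restrict_apply measurableSet_Icc, Set.inter_self,
      Real.volume_Icc, smul_eq_mul, ← ENNReal.ofReal_mul hr.le,
      show b - a = 1 / r by rw [hbd]; ring,
      mul_one_div_cancel hr.ne', ENNReal.ofReal_one]
  have hτuniv : τ Set.univ = 1 := by
    rw [hτ, Measure.smul_apply, Measure.restrict_apply MeasurableSet.univ, Set.univ_inter]
    rw [hτ, Measure.smul_apply, Measure.restrict_apply measurableSet_Icc, Set.inter_self] at hτIcc
    exact hτIcc
  haveI hτprob : IsProbabilityMeasure τ := ⟨hτuniv⟩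
  set π₀ : Measure (ℝ × ℝ × ℝ) := μ.prod (ν.prod τ) with hπ₀
  have hπ₀mem : IsProbabilityMeasure π₀ ∧ π₀.map Prod.fst = μ ∧
      π₀.map (fun p => p.2.1) = ν ∧
      π₀.map (fun p => p.2.2) ≤ ENNReal.ofReal r • volume.restrict (Set.Icc 0 t_f) := by
    refine ⟨by rw [hπ₀]; infer_instance, ?_, ?_, ?_⟩
    · rw [hπ₀]; exact Measure.fst_prod
    · have : (fun p : ℝ × ℝ × ℝ => p.2.1) = Prod.fst ∘ Prod.snd := rfl
      rw [this, ← Measure.map_map measurable_fst measurable_snd,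
        show π₀.map Prod.snd = ν.prod τ from Measure.snd_prod]
      exact Measure.fst_prod
    · have : (fun p : ℝ × ℝ × ℝ => p.2.2) = Prod.snd ∘ Prod.snd := rfl
      rw [this, ← Measure.map_map measurable_snd measurable_snd,
        show π₀.map Prod.snd = ν.prod τ from Measure.snd_prod,
        show (ν.prod τ).map Prod.snd = τ from Measure.snd_prod]
      rw [hτ, Measure.le_iff']
      intro s
      simp only [Measure.smul_apply, smul_eq_mul]
      exact mul_le_mul_right (Measure.le_iff'.mp
        (Measure.restrict_mono (Set.Icc_subset_Icc ha.le hb.le) le_rfl) s) _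
  set C : ℝ≥0∞ := ENNReal.ofReal (M ^ 2) / ENNReal.ofReal a
      + ENNReal.ofReal (M ^ 2) / ENNReal.ofReal (t_f - b) with hC
  have hCfin : C < ⊤ := by
    rw [hC]
    exact ENNReal.add_lt_top.mpr ⟨ENNReal.div_lt_top ofReal_ne_top
        (ne_of_gt (ENNReal.ofReal_pos.mpr ha)),
      ENNReal.div_lt_top ofReal_ne_top (ne_of_gt (ENNReal.ofReal_pos.mpr (by linarith)))⟩
  set G : Set (ℝ × ℝ × ℝ) := (Set.Ioo (-M) 0) ×ˢ ((Set.Ioo 0 M) ×ˢ (Set.Icc a b)) with hGd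
  have hGmeas : MeasurableSet G :=
    (measurableSet_Ioo.prod (measurableSet_Ioo.prod measurableSet_Icc))
  have hGfull : π₀ Gᶜ = 0 := by
    rw [prob_compl_eq_zero_iff hGmeas, hGd, hπ₀, Measure.prod_prod, Measure.prod_prod,
      (prob_compl_eq_zero_iff measurableSet_Ioo).mp hμ,
      (prob_compl_eq_zero_iff measurableSet_Ioo).mp hν, hτIcc, one_mul, one_mul]
  have hJπ₀ : J π₀ ≤ C := by
    rw [hJ]
    calc (∫⁻ p : ℝ × ℝ × ℝ, ENNReal.ofReal (p.1 ^ 2) / ENNReal.ofReal p.2.2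
          + ENNReal.ofReal (p.2.1 ^ 2) / ENNReal.ofReal (t_f - p.2.2) ∂π₀)
        ≤ ∫⁻ _, C ∂π₀ := by
          refine lintegral_mono_ae ?_
          have hae : ∀ᵐ p ∂π₀, p ∈ G := by
            rw [ae_iff]
            convert hGfull using 2
            exact rfl
          filter_upwards [hae] with p hp
          obtain ⟨hx, hy, ht⟩ := hp
          rw [hC]
          refine add_le_add (ENNReal.div_le_div ?_ ?_) (ENNReal.div_le_div ?_ ?_)
          · exact ENNReal.ofReal_le_ofReal (sq_le_sq' hx.1.le (hx.2.le.trans hM.le))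
          · exact ENNReal.ofReal_le_ofReal ht.1
          · exact ENNReal.ofReal_le_ofReal (sq_le_sq' (by linarith [hy.1]) hy.2.le)
          · exact ENNReal.ofReal_le_ofReal (by linarith [ht.2])
      _ = C := by rw [lintegral_const, measure_univ, mul_one]
  have hJfin : J π < ⊤ :=
    lt_of_le_of_lt (le_trans (hπopt π₀ (by rw [hPlans]; exact hπ₀mem)) hJπ₀) hCfin
  have hAfin : A ≠ ⊤ := by
    intro h; rw [hJπ, h, top_add] at hJfin; exact (lt_irrefl _ hJfin)
  have hBfin : B ≠ ⊤ := by
    intro h; rw [hJπ, h, add_top] at hJfin; exact (lt_irrefl _ hJfin)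
  have hσprob : IsProbabilityMeasure σ := by
    rw [hσ]; exact Measure.isProbabilityMeasure_map (by fun_prop)
  constructor
  · -- Part 1
    intro η hηprob hη1 hη2
    set ρ : Measure (ℝ × ℝ) := π.map (fun p => (p.2.2, p.2.1)) with hρ
    haveI : IsProbabilityMeasure ρ := Measure.isProbabilityMeasure_map (by fun_prop)
    set η' : Measure (ℝ × ℝ) := η.map Prod.swap with hη'
    haveI : IsProbabilityMeasure η' := Measure.isProbabilityMeasure_map (by fun_prop)
    have hmarg : η'.map Prod.fst = ρ.map Prod.fst := by
      rw [hη', hρ, Measure.map_map measurable_fst measurable_swap,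
        Measure.map_map measurable_fst (by fun_prop)]
      show η.map Prod.snd = π.map (fun p => p.2.2)
      rw [hη2, hσ]
    obtain ⟨m, hm1, hm2, hm3⟩ := glue_aux ρ η' hmarg
    haveI := hm1
    set π' : Measure (ℝ × ℝ × ℝ) := m.map (fun q => (q.1.2, q.2, q.1.1)) with hπ'
    have hπ'mem : π' ∈ Plans := by
      rw [hPlans]
      refine ⟨Measure.isProbabilityMeasure_map (by fun_prop), ?_, ?_, ?_⟩
      · rw [hπ', Measure.map_map measurable_fst (by fun_prop)]
        show m.map (fun q : (ℝ × ℝ) × ℝ => q.1.2) = μ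
        rw [show (fun q : (ℝ × ℝ) × ℝ => q.1.2) = Prod.snd ∘ Prod.fst from rfl,
          ← Measure.map_map measurable_snd measurable_fst, hm2, hη',
          Measure.map_map measurable_snd measurable_swap]
        show η.map Prod.fst = μ
        exact hη1
      · rw [hπ', Measure.map_map (by fun_prop : Measurable fun p : ℝ × ℝ × ℝ => p.2.1)
          (by fun_prop)]
        show m.map (fun q : (ℝ × ℝ) × ℝ => q.2) = ν
        rw [show (fun q : (ℝ × ℝ) × ℝ => q.2)
            = Prod.snd ∘ (fun q : (ℝ × ℝ) × ℝ => (q.1.1, q.2)) from rfl,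
          ← Measure.map_map measurable_snd (by fun_prop), hm3, hρ,
          Measure.map_map measurable_snd (by fun_prop)]
        show π.map (fun p => p.2.1) = ν
        exact hπy
      · rw [hπ', Measure.map_map (by fun_prop : Measurable fun p : ℝ × ℝ × ℝ => p.2.2)
          (by fun_prop)]
        show m.map (fun q : (ℝ × ℝ) × ℝ => q.1.1) ≤ _
        rw [show (fun q : (ℝ × ℝ) × ℝ => q.1.1) = Prod.fst ∘ Prod.fst from rfl,
          ← Measure.map_map measurable_fst measurable_fst, hm2, hη',
          Measure.map_map measurable_fst measurable_swap]
        show η.map Prod.snd ≤ _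
        rw [hη2, hσ]
        exact hπt
    have hJπ' : J π' = (∫⁻ p, ENNReal.ofReal (p.1 ^ 2) / ENNReal.ofReal p.2 ∂η) + B := by
      rw [hJ]
      beta_reduce
      rw [hπ', lintegral_map (by fun_prop) (by fun_prop)]
      have : (fun q : (ℝ × ℝ) × ℝ => ENNReal.ofReal (q.1.2 ^ 2) / ENNReal.ofReal q.1.1
          + ENNReal.ofReal (q.2 ^ 2) / ENNReal.ofReal (t_f - q.1.1))
          = fun q => g1 q.1 + g2 (q.1.1, q.2) := rfl
      rw [this, lintegral_add_left (by fun_prop)]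
      congr 1
      · rw [← lintegral_map hg1m measurable_fst, hm2, hη',
          lintegral_map hg1m measurable_swap]
        rfl
      · rw [← lintegral_map hg2m
            (show Measurable fun q : (ℝ × ℝ) × ℝ => (q.1.1, q.2) by fun_prop), hm3, hρ,
          lintegral_map hg2m
            (show Measurable fun p : ℝ × ℝ × ℝ => (p.2.2, p.2.1) by fun_prop)]
    have := hπopt π' hπ'mem
    rw [hJπ, hJπ'] at this
    rw [hAeq]
    exact (ENNReal.add_le_add_iff_right hBfin).mp this
  · -- Part 2
    intro η hηprob hη1 hη2
    set ρ : Measure (ℝ × ℝ) := π.map (fun p => (p.2.2, p.1)) with hρ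
    haveI : IsProbabilityMeasure ρ := Measure.isProbabilityMeasure_map (by fun_prop)
    have hmarg : η.map Prod.fst = ρ.map Prod.fst := by
      rw [hη1, hρ, Measure.map_map measurable_fst (by fun_prop), hσ]
      rfl
    obtain ⟨m, hm1, hm2, hm3⟩ := glue_aux ρ η hmarg
    haveI := hm1
    set π' : Measure (ℝ × ℝ × ℝ) := m.map (fun q => (q.2, q.1.2, q.1.1)) with hπ'
    have hπ'mem : π' ∈ Plans := by
      rw [hPlans]
      refine ⟨Measure.isProbabilityMeasure_map (by fun_prop), ?_, ?_, ?_⟩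
      · rw [hπ', Measure.map_map measurable_fst (by fun_prop)]
        show m.map (fun q : (ℝ × ℝ) × ℝ => q.2) = μ
        rw [show (fun q : (ℝ × ℝ) × ℝ => q.2)
            = Prod.snd ∘ (fun q : (ℝ × ℝ) × ℝ => (q.1.1, q.2)) from rfl,
          ← Measure.map_map measurable_snd (by fun_prop), hm3, hρ,
          Measure.map_map measurable_snd (by fun_prop)]
        show π.map Prod.fst = μ
        exact hπx
      · rw [hπ', Measure.map_map (by fun_prop : Measurable fun p : ℝ × ℝ × ℝ => p.2.1)
          (by fun_prop)]
        show m.map (fun q : (ℝ × ℝ) × ℝ => q.1.2) = ν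
        rw [show (fun q : (ℝ × ℝ) × ℝ => q.1.2) = Prod.snd ∘ Prod.fst from rfl,
          ← Measure.map_map measurable_snd measurable_fst, hm2]
        exact hη2
      · rw [hπ', Measure.map_map (by fun_prop : Measurable fun p : ℝ × ℝ × ℝ => p.2.2)
          (by fun_prop)]
        show m.map (fun q : (ℝ × ℝ) × ℝ => q.1.1) ≤ _
        rw [show (fun q : (ℝ × ℝ) × ℝ => q.1.1) = Prod.fst ∘ Prod.fst from rfl,
          ← Measure.map_map measurable_fst measurable_fst, hm2, hη1, hσ]
        exact hπt
    have hJπ' : J π' = A + ∫⁻ p, ENNReal.ofReal (p.2 ^ 2) / ENNReal.ofReal (t_f - p.1) ∂η := by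
      rw [hJ]
      beta_reduce
      rw [hπ', lintegral_map (by fun_prop) (by fun_prop)]
      have : (fun q : (ℝ × ℝ) × ℝ => ENNReal.ofReal (q.2 ^ 2) / ENNReal.ofReal q.1.1
          + ENNReal.ofReal (q.1.2 ^ 2) / ENNReal.ofReal (t_f - q.1.1))
          = fun q => g1 (q.1.1, q.2) + g2 q.1 := rfl
      rw [this, lintegral_add_left (by fun_prop)]
      congr 1
      · rw [← lintegral_map hg1m
            (show Measurable fun q : (ℝ × ℝ) × ℝ => (q.1.1, q.2) by fun_prop), hm3, hρ,
          lintegral_map hg1m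
            (show Measurable fun p : ℝ × ℝ × ℝ => (p.2.2, p.1) by fun_prop)]
      · rw [← lintegral_map hg2m measurable_fst, hm2]
    have := hπopt π' hπ'mem
    rw [hJπ, hJπ'] at this
    rw [hBeq]
    exact (ENNReal.add_le_add_iff_left hAfin).mp this
end

section
/- Let μ, ν be probability measures on ℝⁿ, ξ ∈ ℝⁿ, and define pushforwards μ̃ = d_ξ # μ and ν̃ = d_ξ # ν on [0,∞) where d_ξ(x) = ‖x − ξ‖. Then the infimum of ∫ (‖ξ−x‖²/t + ‖y−ξ‖²/(t_f−t)) dπ over couplings π of (μ, ν) with t-marginal density ≤ r equals the infimum of ∫ (u²/t + v²/(t_f−t)) dπ̃ over couplings π̃ of (μ̃, ν̃) with t-marginal density ≤ r. -/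
open MeasureTheory ENNReal ProbabilityTheory

private lemma exists_kernel_radial (n : ℕ) (μ : Measure (EuclideanSpace ℝ (Fin n)))
    [IsProbabilityMeasure μ] (ξ : EuclideanSpace ℝ (Fin n)) :
    ∃ κ : Kernel ℝ (EuclideanSpace ℝ (Fin n)), IsMarkovKernel κ ∧
      (∀ s : Set (EuclideanSpace ℝ (Fin n)), MeasurableSet s →
        ∫⁻ u, κ u s ∂(μ.map (fun x => ‖x - ξ‖)) = μ s) ∧
      (∀ᵐ u ∂(μ.map (fun x => ‖x - ξ‖)), κ u {x | ‖x - ξ‖ ≠ u} = 0) := by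
  have hd : Measurable fun x : EuclideanSpace ℝ (Fin n) => ‖x - ξ‖ :=
    (measurable_id.sub_const ξ).norm
  have hmm : Measurable fun x : EuclideanSpace ℝ (Fin n) => (‖x - ξ‖, x) :=
    hd.prodMk measurable_id
  set ρ : Measure (ℝ × EuclideanSpace ℝ (Fin n)) := μ.map (fun x => (‖x - ξ‖, x)) with hρ
  have : IsProbabilityMeasure ρ := Measure.isProbabilityMeasure_map hmm.aemeasurable
  have hfst : ρ.fst = μ.map (fun x => ‖x - ξ‖) := by
    rw [hρ, Measure.fst, Measure.map_map measurable_fst hmm]; rfl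
  have hdis : (μ.map (fun x => ‖x - ξ‖)) ⊗ₘ ρ.condKernel = ρ := by
    rw [← hfst]; exact ρ.disintegrate ρ.condKernel
  refine ⟨ρ.condKernel, inferInstance, ?_, ?_⟩
  · intro s hs
    have h1 : ((μ.map (fun x => ‖x - ξ‖)) ⊗ₘ ρ.condKernel) (Prod.snd ⁻¹' s)
        = ρ (Prod.snd ⁻¹' s) := by rw [hdis]
    rw [Measure.compProd_apply (measurable_snd hs)] at h1
    have h2 : ∀ a : ℝ, Prod.mk a ⁻¹' (Prod.snd ⁻¹' s) = s := fun a => rfl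
    simp only [h2] at h1
    rw [h1, hρ, Measure.map_apply hmm (measurable_snd hs)]; rfl
  · set S : Set (ℝ × EuclideanSpace ℝ (Fin n)) := {p | ‖p.2 - ξ‖ ≠ p.1} with hS
    have hSm : MeasurableSet S :=
      (measurableSet_eq_fun (hd.comp measurable_snd) measurable_fst).compl
    have hρS : ρ S = 0 := by
      rw [hρ, Measure.map_apply hmm hSm]
      convert measure_empty (μ := μ)
      ext x; simp [hS]
    have h1 : ∫⁻ a, ρ.condKernel a (Prod.mk a ⁻¹' S) ∂(μ.map (fun x => ‖x - ξ‖)) = 0 := by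
      rw [← Measure.compProd_apply hSm, hdis]; exact hρS
    have hmeas : Measurable fun a => ρ.condKernel a (Prod.mk a ⁻¹' S) :=
      Kernel.measurable_kernel_prodMk_left hSm
    rw [lintegral_eq_zero_iff hmeas] at h1
    filter_upwards [h1] with u hu
    exact hu

theorem stmt_15 (n : ℕ) (μ ν : Measure (EuclideanSpace ℝ (Fin n)))
    [IsProbabilityMeasure μ] [IsProbabilityMeasure ν]
    (ξ : EuclideanSpace ℝ (Fin n)) (r t_f : ℝ) (hr : 0 < r) (htf : 0 < t_f)
    (hrtf : 1 < r * t_f) :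
    sInf {c : ℝ≥0∞ |
      ∃ π : Measure (EuclideanSpace ℝ (Fin n) × EuclideanSpace ℝ (Fin n) × ℝ),
        IsProbabilityMeasure π ∧
        π.map Prod.fst = μ ∧
        π.map (fun p => p.2.1) = ν ∧
        π.map (fun p => p.2.2) ≤ ENNReal.ofReal r • volume.restrict (Set.Icc 0 t_f) ∧
        c = ∫⁻ p, (ENNReal.ofReal (‖ξ - p.1‖ ^ 2) / ENNReal.ofReal p.2.2
          + ENNReal.ofReal (‖p.2.1 - ξ‖ ^ 2) / ENNReal.ofReal (t_f - p.2.2)) ∂π}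
    = sInf {c : ℝ≥0∞ |
      ∃ π : Measure (ℝ × ℝ × ℝ),
        IsProbabilityMeasure π ∧
        π.map Prod.fst = μ.map (fun x => ‖x - ξ‖) ∧
        π.map (fun p => p.2.1) = ν.map (fun y => ‖y - ξ‖) ∧
        π.map (fun p => p.2.2) ≤ ENNReal.ofReal r • volume.restrict (Set.Icc 0 t_f) ∧
        c = ∫⁻ p, (ENNReal.ofReal (p.1 ^ 2) / ENNReal.ofReal p.2.2
          + ENNReal.ofReal (p.2.1 ^ 2) / ENNReal.ofReal (t_f - p.2.2)) ∂π} := by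
  have hd : Measurable fun x : EuclideanSpace ℝ (Fin n) => ‖x - ξ‖ :=
    (measurable_id.sub_const ξ).norm
  have hG : Measurable fun p : ℝ × ℝ × ℝ =>
      ENNReal.ofReal (p.1 ^ 2) / ENNReal.ofReal p.2.2
        + ENNReal.ofReal (p.2.1 ^ 2) / ENNReal.ofReal (t_f - p.2.2) := by
    apply Measurable.add
    · exact ((measurable_fst.pow_const 2).ennreal_ofReal).div
        (measurable_snd.snd.ennreal_ofReal)
    · exact ((measurable_snd.fst.pow_const 2).ennreal_ofReal).div
        ((measurable_const.sub measurable_snd.snd).ennreal_ofReal)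
  have hF : Measurable fun p : EuclideanSpace ℝ (Fin n) × EuclideanSpace ℝ (Fin n) × ℝ =>
      ENNReal.ofReal (‖ξ - p.1‖ ^ 2) / ENNReal.ofReal p.2.2
        + ENNReal.ofReal (‖p.2.1 - ξ‖ ^ 2) / ENNReal.ofReal (t_f - p.2.2) := by
    apply Measurable.add
    · exact (((measurable_const.sub measurable_fst).norm.pow_const 2).ennreal_ofReal).div
        (measurable_snd.snd.ennreal_ofReal)
    · exact (((measurable_snd.fst.sub_const ξ).norm.pow_const 2).ennreal_ofReal).div
        ((measurable_const.sub measurable_snd.snd).ennreal_ofReal)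
  congr 1
  ext c
  simp only [Set.mem_setOf_eq]
  constructor
  · rintro ⟨π, hπ, h1, h2, h3, rfl⟩
    set T : (EuclideanSpace ℝ (Fin n) × EuclideanSpace ℝ (Fin n) × ℝ) → ℝ × ℝ × ℝ :=
      fun p => (‖p.1 - ξ‖, ‖p.2.1 - ξ‖, p.2.2) with hTdef
    have hT : Measurable T :=
      (hd.comp measurable_fst).prodMk ((hd.comp measurable_snd.fst).prodMk measurable_snd.snd)
    refine ⟨π.map T, Measure.isProbabilityMeasure_map hT.aemeasurable, ?_, ?_, ?_, ?_⟩
    · rw [Measure.map_map measurable_fst hT, ← h1, Measure.map_map hd measurable_fst]; rfl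
    · rw [Measure.map_map measurable_snd.fst hT, ← h2, Measure.map_map hd measurable_snd.fst]; rfl
    · rw [Measure.map_map measurable_snd.snd hT]; exact h3
    · rw [lintegral_map hG hT]
      refine lintegral_congr fun p => ?_
      simp only [hTdef]
      rw [norm_sub_rev ξ p.1]
  · rintro ⟨π, hπ, h1, h2, h3, rfl⟩
    obtain ⟨κμ, hκμM, hκμ1, hκμ2⟩ := exists_kernel_radial n μ ξ
    obtain ⟨κν, hκνM, hκν1, hκν2⟩ := exists_kernel_radial n ν ξ
    set K : Kernel (ℝ × ℝ × ℝ) (EuclideanSpace ℝ (Fin n) × EuclideanSpace ℝ (Fin n) × ℝ) :=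
      (κμ.comap Prod.fst measurable_fst) ×ₖ
        ((κν.comap (fun p : ℝ × ℝ × ℝ => p.2.1) measurable_snd.fst) ×ₖ
          Kernel.deterministic (fun p : ℝ × ℝ × ℝ => p.2.2) measurable_snd.snd) with hKdef
    have hKapp : ∀ p : ℝ × ℝ × ℝ,
        K p = (κμ p.1).prod ((κν p.2.1).prod (Measure.dirac p.2.2)) := by
      intro p
      rw [hKdef, Kernel.prod_apply, Kernel.prod_apply, Kernel.comap_apply, Kernel.comap_apply,
        Kernel.deterministic_apply]
    set π' := π.bind (fun p => K p) with hπ'def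
    have hKm : Measurable fun p => K p := K.measurable
    have hprob : ∀ p : ℝ × ℝ × ℝ, K p Set.univ = 1 := fun p => measure_univ
    have hπ'prob : IsProbabilityMeasure π' := by
      constructor
      rw [hπ'def, Measure.bind_apply MeasurableSet.univ hKm.aemeasurable]
      simp [hprob]
    refine ⟨π', hπ'prob, ?_, ?_, ?_, ?_⟩
    · ext s hs
      rw [Measure.map_apply measurable_fst hs, hπ'def,
        Measure.bind_apply (measurable_fst hs) hKm.aemeasurable]
      have : ∀ p : ℝ × ℝ × ℝ, K p (Prod.fst ⁻¹' s) = κμ p.1 s := by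
        intro p
        rw [hKapp p, ← Set.prod_univ, Measure.prod_prod, measure_univ, mul_one]
      simp_rw [this]
      rw [show (∫⁻ p, κμ p.1 s ∂π) = ∫⁻ u, κμ u s ∂(π.map Prod.fst) from
        (lintegral_map (κμ.measurable_coe hs) measurable_fst).symm, h1, hκμ1 s hs]
    · ext s hs
      rw [Measure.map_apply measurable_snd.fst hs, hπ'def,
        Measure.bind_apply (measurable_snd.fst hs) hKm.aemeasurable]
      have : ∀ p : ℝ × ℝ × ℝ, K p ((fun q => q.2.1) ⁻¹' s) = κν p.2.1 s := by
        intro p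
        rw [hKapp p]
        have hset : ((fun q : EuclideanSpace ℝ (Fin n) × EuclideanSpace ℝ (Fin n) × ℝ => q.2.1)
            ⁻¹' s) = Set.univ ×ˢ (s ×ˢ Set.univ) := by
          ext q; simp
        rw [hset, Measure.prod_prod, Measure.prod_prod, measure_univ, measure_univ,
          one_mul, mul_one]
      simp_rw [this]
      rw [show (∫⁻ p, κν p.2.1 s ∂π) = ∫⁻ u, κν u s ∂(π.map (fun p : ℝ × ℝ × ℝ => p.2.1)) from
        (lintegral_map (κν.measurable_coe hs) measurable_snd.fst).symm, h2, hκν1 s hs]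
    · have heq : π'.map (fun q => q.2.2) = π.map (fun p => p.2.2) := by
        ext s hs
        rw [Measure.map_apply measurable_snd.snd hs, Measure.map_apply measurable_snd.snd hs,
          hπ'def, Measure.bind_apply (measurable_snd.snd hs) hKm.aemeasurable]
        have : ∀ p : ℝ × ℝ × ℝ,
            K p ((fun q : EuclideanSpace ℝ (Fin n) × EuclideanSpace ℝ (Fin n) × ℝ => q.2.2)
              ⁻¹' s) = Measure.dirac p.2.2 s := by
          intro p
          rw [hKapp p]
          have hset : ((fun q : EuclideanSpace ℝ (Fin n) × EuclideanSpace ℝ (Fin n) × ℝ => q.2.2)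
              ⁻¹' s) = Set.univ ×ˢ (Set.univ ×ˢ s) := by
            ext q; simp
          rw [hset, Measure.prod_prod, Measure.prod_prod, measure_univ, measure_univ,
            one_mul, one_mul]
        simp_rw [this]
        simp_rw [Measure.dirac_apply' _ hs]
        calc ∫⁻ p : ℝ × ℝ × ℝ, s.indicator 1 p.2.2 ∂π
            = ∫⁻ p : ℝ × ℝ × ℝ, ((fun q : ℝ × ℝ × ℝ => q.2.2) ⁻¹' s).indicator 1 p ∂π := by
              refine lintegral_congr fun p => ?_
              by_cases h : p.2.2 ∈ s <;> simp [Set.indicator, h]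
          _ = π ((fun q : ℝ × ℝ × ℝ => q.2.2) ⁻¹' s) :=
              lintegral_indicator_one (measurable_snd.snd hs)
      rw [heq]; exact h3
    · -- cost equality
      rw [hπ'def, Measure.lintegral_bind hKm.aemeasurable hF.aemeasurable]
      refine (lintegral_congr_ae ?_).symm
      -- a.e. concentration facts transported to π
      have hSμ : MeasurableSet {p : ℝ × EuclideanSpace ℝ (Fin n) | ‖p.2 - ξ‖ ≠ p.1} :=
        (measurableSet_eq_fun (hd.comp measurable_snd) measurable_fst).compl
      have hmμ : Measurable fun u : ℝ => κμ u {x | ‖x - ξ‖ ≠ u} :=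
        Kernel.measurable_kernel_prodMk_left (κ := κμ) hSμ
      have hmν : Measurable fun u : ℝ => κν u {x | ‖x - ξ‖ ≠ u} :=
        Kernel.measurable_kernel_prodMk_left (κ := κν) hSμ
      have haeμ : ∀ᵐ p : ℝ × ℝ × ℝ ∂π, κμ p.1 {x | ‖x - ξ‖ ≠ p.1} = 0 := by
        rw [← h1] at hκμ2
        exact (ae_map_iff measurable_fst.aemeasurable
          (hmμ (measurableSet_singleton 0))).mp hκμ2
      have haeν : ∀ᵐ p : ℝ × ℝ × ℝ ∂π, κν p.2.1 {x | ‖x - ξ‖ ≠ p.2.1} = 0 := by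
        rw [← h2] at hκν2
        exact (ae_map_iff measurable_snd.fst.aemeasurable
          (hmν (measurableSet_singleton 0))).mp hκν2
      filter_upwards [haeμ, haeν] with p hpμ hpν
      rw [hKapp p]
      haveI : IsProbabilityMeasure (κμ p.1) := hκμM.isProbabilityMeasure p.1
      haveI : IsProbabilityMeasure (κν p.2.1) := hκνM.isProbabilityMeasure p.2.1
      set m : Measure (EuclideanSpace ℝ (Fin n) × EuclideanSpace ℝ (Fin n) × ℝ) :=
        (κμ p.1).prod ((κν p.2.1).prod (Measure.dirac p.2.2)) with hm
      have hae1 : ∀ᵐ q ∂m, ‖q.1 - ξ‖ = p.1 := by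
        rw [ae_iff]
        have hset : {q : EuclideanSpace ℝ (Fin n) × EuclideanSpace ℝ (Fin n) × ℝ |
            ¬ ‖q.1 - ξ‖ = p.1} = {x | ‖x - ξ‖ ≠ p.1} ×ˢ Set.univ := by
          ext q; simp
        rw [hset, hm, Measure.prod_prod, hpμ, zero_mul]
      have hae2 : ∀ᵐ q ∂m, ‖q.2.1 - ξ‖ = p.2.1 := by
        rw [ae_iff]
        have hset : {q : EuclideanSpace ℝ (Fin n) × EuclideanSpace ℝ (Fin n) × ℝ |
            ¬ ‖q.2.1 - ξ‖ = p.2.1} = Set.univ ×ˢ ({y | ‖y - ξ‖ ≠ p.2.1} ×ˢ Set.univ) := by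
          ext q; simp
        rw [hset, hm, Measure.prod_prod, Measure.prod_prod, hpν, zero_mul, mul_zero]
      have hae3 : ∀ᵐ q ∂m, q.2.2 = p.2.2 := by
        rw [ae_iff]
        have hset : {q : EuclideanSpace ℝ (Fin n) × EuclideanSpace ℝ (Fin n) × ℝ |
            ¬ q.2.2 = p.2.2} = Set.univ ×ˢ (Set.univ ×ˢ ({p.2.2}ᶜ)) := by
          ext q; simp [eq_comm]
        rw [hset, hm, Measure.prod_prod, Measure.prod_prod,
          Measure.dirac_apply' _ (measurableSet_singleton _).compl]
        simp
      have : ∫⁻ q, (ENNReal.ofReal (‖ξ - q.1‖ ^ 2) / ENNReal.ofReal q.2.2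
          + ENNReal.ofReal (‖q.2.1 - ξ‖ ^ 2) / ENNReal.ofReal (t_f - q.2.2)) ∂m
          = ∫⁻ _, (ENNReal.ofReal (p.1 ^ 2) / ENNReal.ofReal p.2.2
          + ENNReal.ofReal (p.2.1 ^ 2) / ENNReal.ofReal (t_f - p.2.2)) ∂m := by
        refine lintegral_congr_ae ?_
        filter_upwards [hae1, hae2, hae3] with q e1 e2 e3
        rw [norm_sub_rev ξ q.1, e1, e2, e3]
      rw [this, lintegral_const, measure_univ, mul_one]
end
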